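/- Let (A, ∘, ρ, ⟨·,·⟩) be a Courant algebroid and N an orthogonal (N* = −N) Courant-Nijenhuis tensor. Then N²(Y∘Y) = (N²Y)∘Y for all Y. -/
import Mathlib


/-- On a Courant algebroid, if `N` is an orthogonal (`N* = -N`)
Courant-Nijenhuis tensor (vanishing Nijenhuis torsion), then
`N²(Y∘Y) = (N²Y)∘Y` for all `Y`. -/
theorem nsq_square_of_orthogonal_nijenhuis
    {A F : Type*} [AddCommGroup A] [Module ℝ A] [AddCommGroup F] [Module ℝ F]
    (m : A →ₗ[ℝ] A →ₗ[ℝ] A)           -- the Leibniz product ∘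
    (B : A →ₗ[ℝ] A →ₗ[ℝ] F)           -- the pairing ⟨·,·⟩
    (ρ : A →ₗ[ℝ] F →ₗ[ℝ] F)           -- the anchor acting on scalars
    (jacobi : ∀ X Y Z : A, m (m X Y) Z = m X (m Y Z) - m Y (m X Z))
    (hsym : ∀ X Y : A, B X Y = B Y X)
    (hnondeg : ∀ a : A, (∀ b : A, B a b = 0) → a = 0)
    (h4 : ∀ X Y : A, ρ X (B Y Y) = (2 : ℝ) • B X (m Y Y))
    (h5 : ∀ X Y : A, ρ X (B Y Y) = (2 : ℝ) • B (m X Y) Y)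
    (N : A →ₗ[ℝ] A)
    (horth : ∀ X Y : A, B (N X) Y = - B X (N Y))
    (cN : A → A → A)
    (hcN : ∀ X Y : A, cN X Y = m (N X) Y + m X (N Y) - N (m X Y))
    (torsion_zero : ∀ X Y : A, m (N X) (N Y) - N (cN X Y) = 0) :
    ∀ Y : A, N (N (m Y Y)) = m (N (N Y)) Y := by
  have htwo : ∀ u v : F, (2:ℝ) • u = (2:ℝ) • v → u = v := fun u v h =>
    smul_right_injective F (by norm_num : (2:ℝ) ≠ 0) h
  -- polarized axiom h4
  have P4 : ∀ a b c : A, ρ a (B b c) = B a (m b c) + B a (m c b) := by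
    intro a b c
    apply htwo
    have h1 := h4 a (b + c)
    have h2 := h4 a b
    have h3 := h4 a c
    simp only [map_add, LinearMap.add_apply] at h1
    rw [hsym c b] at h1
    linear_combination (norm := module) h1 - h2 - h3
  -- polarized axiom h5
  have P5 : ∀ a b c : A, ρ a (B b c) = B (m a b) c + B (m a c) b := by
    intro a b c
    apply htwo
    have h1 := h5 a (b + c)
    have h2 := h5 a b
    have h3 := h5 a c
    simp only [map_add, LinearMap.add_apply] at h1
    rw [hsym c b] at h1
    linear_combination (norm := module) h1 - h2 - h3
  -- ⟨Na, a⟩ = 0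
  have hNa : ∀ a : A, B (N a) a = 0 := by
    intro a
    have h := horth a a
    rw [hsym a (N a)] at h
    apply htwo
    simp only [smul_zero]
    linear_combination (norm := module) h
  intro Y
  -- torsion identities rearranged: N²(a∘b) = N(Na∘b) + N(a∘Nb) − Na∘Nb
  have tors : ∀ X Z : A, N (N (m X Z)) =
      N (m (N X) Z) + N (m X (N Z)) - m (N X) (N Z) := by
    intro X Z
    have t := torsion_zero X Z
    rw [hcN] at t
    simp only [map_add, map_sub] at t
    linear_combination (norm := module) t
  -- NY∘Y + Y∘NY = 0
  have L5 : m (N Y) Y + m Y (N Y) = 0 := by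
    apply hnondeg
    intro b
    have p := P4 b (N Y) Y
    rw [hNa Y, map_zero] at p
    have e1 : B (m (N Y) Y + m Y (N Y)) b = B b (m (N Y) Y) + B b (m Y (N Y)) := by
      rw [map_add, LinearMap.add_apply, hsym (m (N Y) Y) b, hsym (m Y (N Y)) b]
    rw [e1]
    linear_combination (norm := module) -p
  -- N²(Y∘Y) = −(NY∘NY)
  have L6 : N (N (m Y Y)) = - m (N Y) (N Y) := by
    have t := tors Y Y
    have e : N (m (N Y) Y) + N (m Y (N Y)) = 0 := by
      rw [← map_add, L5, map_zero]
    linear_combination (norm := module) t + e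
  -- key1 (doubled): 2⟨N²(X∘Y), Y⟩ = −ρX⟨NY,NY⟩
  have key1 : ∀ X : A, (2:ℝ) • B (N (N (m X Y))) Y = - ρ X (B (N Y) (N Y)) := by
    intro X
    have t := congrArg (fun z => B z Y) (tors X Y)
    simp only [map_add, map_sub, LinearMap.add_apply, LinearMap.sub_apply] at t
    rw [horth (m (N X) Y) Y, horth (m X (N Y)) Y] at t
    have e1 := P5 (N X) Y (N Y)
    rw [hsym Y (N Y), hNa Y, map_zero] at e1
    have e2 := h5 X (N Y)
    linear_combination (norm := module) (2:ℝ) • t + (2:ℝ) • e1 + e2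
  -- key2 (doubled): 2⟨N²(Y∘X), Y⟩ = ρX⟨NY,NY⟩ + 2ρY⟨X, N²Y⟩
  have key2 : ∀ X : A, (2:ℝ) • B (N (N (m Y X))) Y =
      ρ X (B (N Y) (N Y)) + (2:ℝ) • ρ Y (B X (N (N Y))) := by
    intro X
    have t := congrArg (fun z => B z Y) (tors Y X)
    simp only [map_add, map_sub, LinearMap.add_apply, LinearMap.sub_apply] at t
    rw [horth (m (N Y) X) Y, horth (m Y (N X)) Y] at t
    have e1 := P5 (N Y) X (N Y)
    have e2 := P5 Y (N X) (N Y)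
    have e3 := P5 (N Y) (N X) Y
    -- ρNY(⟨X,NY⟩ + ⟨NX,Y⟩) = 0
    have hr : ρ (N Y) (B X (N Y)) + ρ (N Y) (B (N X) Y) = 0 := by
      rw [horth X Y, map_neg]; abel
    -- ⟨Y∘NY + NY∘Y, NX⟩ = 0
    have hz : B (m Y (N Y)) (N X) + B (m (N Y) Y) (N X) = 0 := by
      have := congrArg (fun z => B z (N X)) L5
      simp only [map_add, map_zero, LinearMap.add_apply, LinearMap.zero_apply] at this
      linear_combination (norm := module) this
    -- ⟨NX,NY⟩ = −⟨X,N²Y⟩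
    have ho : B (N X) (N Y) = - B X (N (N Y)) := horth X (N Y)
    rw [ho, map_neg] at e2
    -- ⟨NY∘NY, X⟩ = ⟨X, NY∘NY⟩ and h4
    have e4 := h4 X (N Y)
    rw [hsym X (m (N Y) (N Y))] at e4
    linear_combination (norm := module)
      (2:ℝ) • t + (2:ℝ) • e1 + (2:ℝ) • e2 + (2:ℝ) • e3 - (2:ℝ) • hr + (2:ℝ) • hz - e4
  -- key3 (doubled): 2ρ(N²Y)⟨Y,X⟩ = 2ρY⟨X,N²Y⟩
  have hBN2 : ∀ a b : A, B a (N (N b)) = B (N (N a)) b := by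
    intro a b
    rw [horth (N a) b, horth a (N b), neg_neg]
  have key3 : ∀ X : A, (2:ℝ) • ρ (N (N Y)) (B Y X) = (2:ℝ) • ρ Y (B X (N (N Y))) := by
    intro X
    have p := P4 (N (N Y)) Y X
    rw [hsym (N (N Y)) (m Y X), hsym (N (N Y)) (m X Y),
        hBN2 (m Y X) Y, hBN2 (m X Y) Y] at p
    linear_combination (norm := module) (2:ℝ) • p + key2 X + key1 X
  -- key4: 2⟨X∘N²Y, Y⟩ = −ρX⟨NY,NY⟩
  have key4 : ∀ X : A, (2:ℝ) • B (m X (N (N Y))) Y = - ρ X (B (N Y) (N Y)) := by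
    intro X
    have e := P5 X (N (N Y)) Y
    rw [hBN2 (m X Y) Y] at e
    have hρ : ρ X (B (N (N Y)) Y) = - ρ X (B (N Y) (N Y)) := by
      rw [horth (N Y) Y, map_neg]
    rw [hρ] at e
    linear_combination (norm := module) -(2:ℝ) • e - key1 X
  -- key5: 2⟨N²Y∘X, Y⟩ = 2ρY⟨N²Y,X⟩ + ρX⟨NY,NY⟩
  have key5 : ∀ X : A, (2:ℝ) • B (m (N (N Y)) X) Y =
      (2:ℝ) • ρ Y (B (N (N Y)) X) + ρ X (B (N Y) (N Y)) := by
    intro X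
    have p := P4 Y (N (N Y)) X
    rw [hsym Y (m (N (N Y)) X), hsym Y (m X (N (N Y)))] at p
    linear_combination (norm := module) -(2:ℝ) • p - key4 X
  -- final: ⟨N²Y∘Y − N²(Y∘Y), X⟩ = 0 for all X
  have final : ∀ X : A, B (m (N (N Y)) Y - N (N (m Y Y))) X = 0 := by
    intro X
    have p := P5 (N (N Y)) Y X
    have e4 := h4 X (N Y)
    have k3 := key3 X
    rw [hsym X (N (N Y))] at k3
    have hg : B (m (N (N Y)) Y - N (N (m Y Y))) X
        = B (m (N (N Y)) Y) X - B (N (N (m Y Y))) X := by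
      rw [map_sub, LinearMap.sub_apply]
    rw [hg]
    have l6 : B (N (N (m Y Y))) X = - B X (m (N Y) (N Y)) := by
      rw [L6, map_neg, LinearMap.neg_apply, hsym]
    rw [l6]
    apply htwo
    simp only [smul_zero]
    linear_combination (norm := module) -(2:ℝ) • p + k3 - key5 X - e4
  have hz : m (N (N Y)) Y - N (N (m Y Y)) = 0 := hnondeg _ final
  linear_combination (norm := module) -hz
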